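/- Let F ⊣ G be an adjunction with F : C ⥤ D and counit ε, let J be a small category, and let Y : J ⥤ D be a diagram such that for every object j of J the counit morphism ε_{Y(j)} : F G Y(j) → Y(j) is an isomorphism. Suppose the colimit of Y exists in D and the colimit of the composite G∘Y exists in C. Then the canonical morphism F(colim (G∘Y)) → colim Y (induced by the isomorphisms ε_{Y(j)} and the fact that F preserves colimits) is an isomorphism; in particular, colim Y lies in the essential image of F. -/

import Mathlib

/-!
STATEMENT 5 (1-categorical `Cmpl2Free`):
Let `F ⊣ G` with counit `ε`, `J` a small category and `Y : J ⥤ D` a diagram such that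
`ε_{Y j} : F G (Y j) ⟶ Y j` is an isomorphism for every `j`. If both `colim Y` and
`colim (G ∘ Y)` exist, then the canonical morphism `F (colim (G ∘ Y)) ⟶ colim Y`
(the adjoint transpose of the canonical map `colim (G ∘ Y) ⟶ G (colim Y)`, i.e.
`F (colimit.post Y G) ≫ ε_{colim Y}`) is an isomorphism; in particular `colim Y`
lies in the essential image of `F`.
-/

open CategoryTheory CategoryTheory.Limits

universe w v u₁ u₂

theorem cmpl2free {C : Type u₁} {D : Type u₂} [Category.{v} C] [Category.{v} D]
    {F : C ⥤ D} {G : D ⥤ C} (adj : F ⊣ G)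
    {J : Type w} [SmallCategory J] (Y : J ⥤ D)
    [HasColimit Y] [HasColimit (Y ⋙ G)]
    (hcounit : ∀ j : J, IsIso (adj.counit.app (Y.obj j))) :
    IsIso (F.map (colimit.post Y G) ≫ adj.counit.app (colimit Y)) ∧
      F.essImage (colimit Y) := by
  have : PreservesColimitsOfSize.{w, w} F := adj.leftAdjoint_preservesColimits
  let α : (Y ⋙ G) ⋙ F ≅ Y :=
    NatIso.ofComponents (fun j => asIso (adj.counit.app (Y.obj j)))
      (fun f => adj.counit.naturality (Y.map f))
  have key : F.map (colimit.post Y G) ≫ adj.counit.app (colimit Y) =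
      (preservesColimitIso F (Y ⋙ G)).hom ≫ (HasColimit.isoOfNatIso α).hom := by
    rw [← Iso.inv_comp_eq]
    apply colimit.hom_ext
    intro j
    simp [α, ι_preservesColimitIso_inv_assoc, ← F.map_comp_assoc]; rfl
  have h1 : IsIso (F.map (colimit.post Y G) ≫ adj.counit.app (colimit Y)) := by
    rw [key]; infer_instance
  exact ⟨h1, ⟨colimit (Y ⋙ G), ⟨asIso (F.map (colimit.post Y G) ≫ adj.counit.app (colimit Y))⟩⟩⟩
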